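/- arXiv:1409.6159 — 2 statements merged into one kernel-verified Lean document; each statement's English description precedes it below -/
import Mathlib

section
/- Let p be a prime and let d, z be integers with z² ≡ d (mod p). Then p^n divides N_n(d,z)² - d·D_n(d,z)² for all n ≥ 1. -/
/-- Rédei polynomial `N_n(d,z)` over the integers. -/
def redeiN (d z : ℤ) (n : ℕ) : ℤ :=
  ∑ i ∈ Finset.range (n / 2 + 1), (n.choose (2 * i) : ℤ) * d ^ i * z ^ (n - 2 * i)

/-- Rédei polynomial `D_n(d,z)` over the integers. -/
def redeiD (d z : ℤ) (n : ℕ) : ℤ :=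
  ∑ i ∈ Finset.range (n / 2 + 1), (n.choose (2 * i + 1) : ℤ) * d ^ i * z ^ (n - 2 * i - 1)

section aux

open Finset

variable {M : Type*} [AddCommMonoid M]

lemma aux_even (n : ℕ) (f : ℕ → M) :
    ∑ k ∈ range (n + 1), (if Even k then f (k / 2) else 0) = ∑ i ∈ range (n / 2 + 1), f i := by
  rw [← Finset.sum_filter]
  refine Finset.sum_nbij' (fun k => k / 2) (fun i => 2 * i) ?_ ?_ ?_ ?_ ?_
  · intro a ha
    simp only [mem_filter, mem_range] at ha ⊢
    omega
  · intro a ha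
    simp only [mem_filter, mem_range] at ha ⊢
    exact ⟨by omega, even_two_mul a⟩
  · intro a ha
    simp only [mem_filter, mem_range] at ha
    obtain ⟨-, k, hk⟩ := ha
    omega
  · intro a _; omega
  · intro a _; rfl

lemma aux_odd (n : ℕ) (f : ℕ → M) :
    ∑ k ∈ range (n + 1), (if ¬ Even k then f (k / 2) else 0) = ∑ i ∈ range ((n + 1) / 2), f i := by
  rw [← Finset.sum_filter]
  refine Finset.sum_nbij' (fun k => k / 2) (fun i => 2 * i + 1) ?_ ?_ ?_ ?_ ?_
  · intro a ha
    simp only [mem_filter, mem_range, Nat.not_even_iff_odd] at ha ⊢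
    obtain ⟨h1, k, hk⟩ := ha
    omega
  · intro a ha
    simp only [mem_filter, mem_range, Nat.not_even_iff_odd] at ha ⊢
    exact ⟨by omega, ⟨a, by omega⟩⟩
  · intro a ha
    simp only [mem_filter, mem_range, Nat.not_even_iff_odd] at ha
    obtain ⟨-, k, hk⟩ := ha
    omega
  · intro a _; omega
  · intro a _; rfl

lemma sqrtd_sq (d : ℤ) : (Zsqrtd.sqrtd : ℤ√d) ^ 2 = ((d : ℤ) : ℤ√d) := by
  ext <;> simp [pow_two, Zsqrtd.re_mul, Zsqrtd.im_mul, Zsqrtd.sqrtd]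

lemma sqrtd_pow_even (d : ℤ) (i : ℕ) : (Zsqrtd.sqrtd : ℤ√d) ^ (2 * i) = ((d ^ i : ℤ) : ℤ√d) := by
  rw [pow_mul, sqrtd_sq]
  push_cast
  ring

lemma key_pow (d z : ℤ) (n : ℕ) :
    ((Zsqrtd.sqrtd + (z : ℤ√d)) ^ n).re = redeiN d z n ∧
    ((Zsqrtd.sqrtd + (z : ℤ√d)) ^ n).im = redeiD d z n := by
  have hre : ∀ (s : Finset ℕ) (f : ℕ → ℤ√d), (∑ k ∈ s, f k).re = ∑ k ∈ s, (f k).re := by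
    intro s f
    exact map_sum (AddMonoidHom.mk' Zsqrtd.re (fun a b => rfl)) f s
  have him : ∀ (s : Finset ℕ) (f : ℕ → ℤ√d), (∑ k ∈ s, f k).im = ∑ k ∈ s, (f k).im := by
    intro s f
    exact map_sum (AddMonoidHom.mk' Zsqrtd.im (fun a b => rfl)) f s
  rw [add_pow]
  have hterm : ∀ k, ((Zsqrtd.sqrtd : ℤ√d) ^ k * (z : ℤ√d) ^ (n - k) * (n.choose k : ℤ√d)) =
      if Even k then (((d ^ (k / 2) * z ^ (n - k) * n.choose k : ℤ) : ℤ√d))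
      else ((d ^ (k / 2) * z ^ (n - k) * n.choose k : ℤ) : ℤ√d) * Zsqrtd.sqrtd := by
    intro k
    rcases Nat.even_or_odd k with h | h
    · obtain ⟨i, hi⟩ := h
      rw [if_pos ⟨i, hi⟩, hi, show i + i = 2 * i by ring, sqrtd_pow_even,
        show (2 * i) / 2 = i by omega]
      push_cast
      ring
    · obtain ⟨i, hi⟩ := h
      rw [if_neg (by simpa [Nat.not_even_iff_odd] using ⟨i, hi⟩), hi,
        pow_succ, sqrtd_pow_even, show (2 * i + 1) / 2 = i by omega]
      push_cast
      ring
  constructor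
  · rw [hre]
    have : ∀ k ∈ Finset.range (n + 1),
        ((Zsqrtd.sqrtd : ℤ√d) ^ k * (z : ℤ√d) ^ (n - k) * (n.choose k : ℤ√d)).re =
        (if Even k then (fun i => d ^ i * z ^ (n - 2 * i) * n.choose (2 * i)) (k / 2) else 0) := by
      intro k _
      rw [hterm k]
      rcases em (Even k) with h | h
      · obtain ⟨i, hi⟩ := h
        rw [if_pos ⟨i, hi⟩, if_pos ⟨i, hi⟩, Zsqrtd.re_intCast,
          show k / 2 = i by omega, show k = 2 * i by omega]
      · rw [if_neg h, if_neg h]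
        rw [Zsqrtd.re_mul, Zsqrtd.im_intCast, Zsqrtd.re_intCast]
        simp [Zsqrtd.sqrtd]
    rw [Finset.sum_congr rfl this]
    refine (aux_even n (fun i => d ^ i * z ^ (n - 2 * i) * n.choose (2 * i))).trans ?_
    unfold redeiN
    exact Finset.sum_congr rfl fun i _ => by ring
  · rw [him]
    have : ∀ k ∈ Finset.range (n + 1),
        ((Zsqrtd.sqrtd : ℤ√d) ^ k * (z : ℤ√d) ^ (n - k) * (n.choose k : ℤ√d)).im =
        (if ¬ Even k then (fun i => d ^ i * z ^ (n - (2 * i + 1)) * n.choose (2 * i + 1)) (k / 2)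
          else 0) := by
      intro k _
      rw [hterm k]
      rcases em (Even k) with h | h
      · rw [if_pos h, if_neg (not_not_intro h), Zsqrtd.im_intCast]
      · obtain ⟨i, hi⟩ := Nat.not_even_iff_odd.mp h
        rw [if_neg h, if_pos h]
        simp only [Zsqrtd.im_mul, Zsqrtd.re_intCast, Zsqrtd.im_intCast]
        rw [show k / 2 = i by omega, show k = 2 * i + 1 by omega]
        simp [Zsqrtd.sqrtd]
    rw [Finset.sum_congr rfl this]
    refine (aux_odd n (fun i => d ^ i * z ^ (n - (2 * i + 1)) * n.choose (2 * i + 1))).trans ?_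
    unfold redeiD
    rw [← Finset.sum_subset (Finset.range_subset_range.mpr (by omega : (n + 1) / 2 ≤ n / 2 + 1))]
    · refine Finset.sum_congr rfl fun i hi => ?_
      rw [show n - (2 * i + 1) = n - 2 * i - 1 by omega]
      ring
    · intro i hi hni
      simp only [Finset.mem_range] at hi hni
      rw [Nat.choose_eq_zero_of_lt (by omega)]
      simp

end aux

theorem redei_padic_divisibility (p : ℕ) (hp : p.Prime) (d z : ℤ)
    (hz : z ^ 2 ≡ d [ZMOD (p : ℤ)]) :
    ∀ n : ℕ, 1 ≤ n → ((p : ℤ) ^ n) ∣ (redeiN d z n ^ 2 - d * redeiD d z n ^ 2) := by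
  intro n _
  have hdvd : (p : ℤ) ∣ d - z ^ 2 := Int.ModEq.dvd hz
  have hnorm : Zsqrtd.norm ((Zsqrtd.sqrtd + (z : ℤ√d)) ^ n) =
      redeiN d z n ^ 2 - d * redeiD d z n ^ 2 := by
    rw [Zsqrtd.norm_def, (key_pow d z n).1, (key_pow d z n).2]
    ring
  have hbase : Zsqrtd.norm (Zsqrtd.sqrtd + (z : ℤ√d)) = z ^ 2 - d := by
    rw [Zsqrtd.norm_def]
    simp [Zsqrtd.re_add, Zsqrtd.im_add, Zsqrtd.re_intCast, Zsqrtd.im_intCast, Zsqrtd.sqrtd]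
    ring
  have hpow : Zsqrtd.norm ((Zsqrtd.sqrtd + (z : ℤ√d)) ^ n) = (z ^ 2 - d) ^ n := by
    rw [← hbase]
    exact map_pow (Zsqrtd.normMonoidHom) _ n
  rw [← hnorm, hpow]
  exact pow_dvd_pow_of_dvd ((dvd_sub_comm).mp hdvd) n
end

section
/- Let p be an odd prime and d an integer that is a quadratic residue mod p with p ∤ d, and let z be an integer with z² ≡ d (mod p) and p ∤ z. Then D_n(d,z) is not divisible by p for all n ≥ 1, and the sequence of p-adic rationals Q_n(d,z) = N_n(d,z)/D_n(d,z) converges in ℚ_p to a square root of d. -/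
lemma redei_key {R : Type*} [CommRing R] (d z : ℤ) (α : R) (hα : α ^ 2 = (d : R)) (n : ℕ) :
    ((z : R) + α) ^ n = (redeiN d z n : R) + α * (redeiD d z n : R) := by
  have h : ((z : R) + α) ^ n
      = ∑ k ∈ Finset.range (n + 1), α ^ k * (z : R) ^ (n - k) * (n.choose k : R) := by
    rw [add_comm]; exact add_pow α (z : R) n
  rw [h, ← Finset.sum_filter_add_sum_filter_not (Finset.range (n + 1)) (fun k => Even k)]
  unfold redeiN redeiD
  push_cast [Finset.mul_sum]
  congr 1
  · refine Finset.sum_nbij' (fun k => k / 2) (fun i => 2 * i) ?_ ?_ ?_ ?_ ?_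
    · intro k hk
      simp only [Finset.mem_filter, Finset.mem_range] at hk ⊢
      omega
    · intro i hi
      simp only [Finset.mem_filter, Finset.mem_range] at hi ⊢
      exact ⟨by omega, even_two_mul i⟩
    · intro k hk
      simp only [Finset.mem_filter, Finset.mem_range] at hk
      obtain ⟨_, i, rfl⟩ := hk
      omega
    · intro i _; omega
    · intro k hk
      simp only [Finset.mem_filter, Finset.mem_range] at hk
      obtain ⟨hkn, i, rfl⟩ := hk
      have hk2 : (i + i) / 2 = i := by omega
      rw [hk2]
      have h1 : α ^ (i + i) = (d : R) ^ i := by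
        rw [← hα, ← pow_mul]; congr 1; omega
      have h2 : 2 * i = i + i := by omega
      rw [h1, h2]; ring
  · have hzero : ∀ i ∈ Finset.range (n / 2 + 1), i ∉ Finset.range ((n + 1) / 2) →
        α * ((n.choose (2 * i + 1) : R) * (d : R) ^ i * (z : R) ^ (n - 2 * i - 1)) = 0 := by
      intro i hi hni
      simp only [Finset.mem_range] at hi hni
      rw [Nat.choose_eq_zero_of_lt (by omega : n < 2 * i + 1)]
      push_cast; ring
    rw [← Finset.sum_subset (Finset.range_subset_range.2 (by omega : (n + 1) / 2 ≤ n / 2 + 1)) hzero]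
    refine Finset.sum_nbij' (fun k => k / 2) (fun i => 2 * i + 1) ?_ ?_ ?_ ?_ ?_
    · intro k hk
      simp only [Finset.mem_filter, Finset.mem_range] at hk ⊢
      rcases hk with ⟨hkn, hodd⟩
      rw [Nat.not_even_iff_odd] at hodd
      obtain ⟨i, rfl⟩ := hodd
      omega
    · intro i hi
      simp only [Finset.mem_filter, Finset.mem_range] at hi ⊢
      exact ⟨by omega, by simp [Nat.not_even_iff_odd, Nat.odd_iff]⟩
    · intro k hk
      simp only [Finset.mem_filter, Finset.mem_range] at hk
      rcases hk with ⟨_, hodd⟩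
      rw [Nat.not_even_iff_odd, Nat.odd_iff] at hodd
      omega
    · intro i _; omega
    · intro k hk
      simp only [Finset.mem_filter, Finset.mem_range] at hk
      rcases hk with ⟨hkn, hodd⟩
      rw [Nat.not_even_iff_odd] at hodd
      obtain ⟨i, rfl⟩ := hodd
      have hk2 : (2 * i + 1) / 2 = i := by omega
      rw [hk2]
      have h1 : α ^ (2 * i + 1) = (d : R) ^ i * α := by
        rw [pow_succ, ← hα, ← pow_mul]
      have h2 : n - (2 * i + 1) = n - 2 * i - 1 := by omega
      rw [h1, h2]; ring

open Filter in
theorem redei_padic_convergence (p : ℕ) [Fact p.Prime] (hodd : Odd p) (d z : ℤ)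
    (hd : ¬ (p : ℤ) ∣ d) (hz : z ^ 2 ≡ d [ZMOD (p : ℤ)]) (hpz : ¬ (p : ℤ) ∣ z) :
    (∀ n : ℕ, 1 ≤ n → ¬ (p : ℤ) ∣ redeiD d z n) ∧
    ∃ α : ℚ_[p], α ^ 2 = (d : ℚ_[p]) ∧
      Tendsto (fun n : ℕ => ((redeiN d z n : ℚ_[p]) / (redeiD d z n : ℚ_[p])))
        atTop (nhds α) := by
  have hpP : Prime (p : ℤ) := Nat.prime_iff_prime_int.1 Fact.out
  have hp2 : ¬ (p : ℤ) ∣ 2 := by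
    intro h
    have h2 := Int.le_of_dvd (by norm_num) h
    have hp2' : p ≤ 2 := by exact_mod_cast h2
    interval_cases p
    · exact (Nat.not_prime_zero (Fact.out)).elim
    · exact (Nat.not_prime_one (Fact.out)).elim
    · exact absurd hodd (by decide)
  have hp2z : ¬ (p : ℤ) ∣ 2 * z := fun h => ((hpP.dvd_mul).mp h).elim hp2 hpz
  -- Hensel's lemma to get a square root of d in ℤ_[p]
  have hz' : (p : ℤ) ∣ (z ^ 2 - d) := hz.symm.dvd
  set F : Polynomial ℤ_[p] := Polynomial.X ^ 2 - Polynomial.C ((d : ℤ) : ℤ_[p]) with hF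
  have hFeval : ∀ x : ℤ_[p], F.eval x = x ^ 2 - ((d : ℤ) : ℤ_[p]) := by
    intro x; simp [hF]
  have hFderiv : ∀ x : ℤ_[p], F.derivative.eval x = 2 * x := by
    intro x; simp [hF]; left; norm_num
  have hderiv_norm : ‖F.derivative.eval ((z : ℤ_[p]))‖ = 1 := by
    rw [hFderiv]
    have h1 : (2 * (z : ℤ_[p])) = ((2 * z : ℤ) : ℤ_[p]) := by push_cast; ring
    rw [h1]
    refine le_antisymm (PadicInt.norm_le_one _) ?_
    by_contra hlt
    push_neg at hlt
    exact hp2z ((PadicInt.norm_int_lt_one_iff_dvd _).mp hlt)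
  have hhyp : ‖F.eval ((z : ℤ_[p]))‖ < ‖F.derivative.eval ((z : ℤ_[p]))‖ ^ 2 := by
    rw [hderiv_norm, one_pow, hFeval]
    have h1 : ((z : ℤ_[p]) ^ 2 - ((d : ℤ) : ℤ_[p])) = (((z ^ 2 - d : ℤ)) : ℤ_[p]) := by
      push_cast; ring
    rw [h1]
    exact (PadicInt.norm_int_lt_one_iff_dvd _).mpr hz'
  obtain ⟨α₀, hα₀, hdist, -⟩ := hensels_lemma hhyp
  rw [Polynomial.coe_aeval_eq_eval, hFeval] at hα₀
  rw [Polynomial.coe_aeval_eq_eval, hderiv_norm] at hdist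
  set α : ℚ_[p] := (α₀ : ℚ_[p]) with hαdef
  have hα : α ^ 2 = (d : ℚ_[p]) := by
    have := sub_eq_zero.mp hα₀
    calc α ^ 2 = ((α₀ ^ 2 : ℤ_[p]) : ℚ_[p]) := by push_cast; ring
    _ = (d : ℚ_[p]) := by rw [this]; push_cast; ring
  -- r = ‖z - α‖ < 1
  set r : ℝ := ‖(z : ℚ_[p]) - α‖ with hr
  have hrnn : 0 ≤ r := norm_nonneg _
  have hrlt : r < 1 := by
    have : (z : ℚ_[p]) - α = -(((α₀ - (z : ℤ_[p])) : ℤ_[p]) : ℚ_[p]) := by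
      push_cast; ring
    rw [hr, this, norm_neg, PadicInt.padic_norm_e_of_padicInt]
    exact hdist
  -- ‖d‖ = 1, ‖α‖ = 1, ‖2‖ = 1
  have hint_norm_one : ∀ m : ℤ, ¬ (p : ℤ) ∣ m → ‖(m : ℚ_[p])‖ = 1 := by
    intro m hm
    refine le_antisymm (Padic.norm_int_le_one _) ?_
    by_contra hlt
    push_neg at hlt
    exact hm (Padic.norm_intCast_lt_one_iff.mp hlt)
  have hdnorm : ‖(d : ℚ_[p])‖ = 1 := hint_norm_one d hd
  have hαnorm : ‖α‖ = 1 := by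
    have h1 : ‖α‖ ^ 2 = 1 := by rw [← norm_pow, hα, hdnorm]
    nlinarith [norm_nonneg α]
  have h2norm : ‖(2 : ℚ_[p])‖ = 1 := by
    have : ((2 : ℤ) : ℚ_[p]) = (2 : ℚ_[p]) := by push_cast; ring
    rw [← this]; exact hint_norm_one 2 hp2
  have hzplus : ‖(z : ℚ_[p]) + α‖ = 1 := by
    have heq : (z : ℚ_[p]) + α = ((2 * z : ℤ) : ℚ_[p]) + (α - (z : ℚ_[p])) := by
      push_cast; ring
    have h1 : ‖((2 * z : ℤ) : ℚ_[p])‖ = 1 := hint_norm_one _ hp2z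
    have h2 : ‖α - (z : ℚ_[p])‖ = r := by rw [hr, ← norm_neg]; congr 1; ring
    rw [heq, Padic.add_eq_max_of_ne (by rw [h1, h2]; exact (ne_of_lt hrlt).symm),
      h1, h2]
    exact max_eq_left hrlt.le
  -- key identities
  have kp : ∀ n : ℕ, ((z : ℚ_[p]) + α) ^ n
      = (redeiN d z n : ℚ_[p]) + α * (redeiD d z n : ℚ_[p]) :=
    fun n => redei_key d z α hα n
  have km : ∀ n : ℕ, ((z : ℚ_[p]) - α) ^ n
      = (redeiN d z n : ℚ_[p]) - α * (redeiD d z n : ℚ_[p]) := by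
    intro n
    have := redei_key d z (-α) (by rw [neg_pow]; simp [hα]) n
    rw [← sub_eq_add_neg] at this
    rw [this]; ring
  -- ‖D_n‖ = 1 for n ≥ 1
  have hDnorm : ∀ n : ℕ, 1 ≤ n → ‖(redeiD d z n : ℚ_[p])‖ = 1 := by
    intro n hn
    have hdiff : ((z : ℚ_[p]) + α) ^ n - ((z : ℚ_[p]) - α) ^ n
        = 2 * α * (redeiD d z n : ℚ_[p]) := by
      rw [kp n, km n]; ring
    have h1 : ‖((z : ℚ_[p]) + α) ^ n‖ = 1 := by rw [norm_pow, hzplus, one_pow]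
    have h2 : ‖((z : ℚ_[p]) - α) ^ n‖ = r ^ n := by rw [norm_pow]
    have h2lt : r ^ n < 1 :=
      lt_of_le_of_lt (pow_le_pow_of_le_one hrnn hrlt.le hn) (by rwa [pow_one])
    have h3 : ‖((z : ℚ_[p]) + α) ^ n - ((z : ℚ_[p]) - α) ^ n‖ = 1 := by
      rw [sub_eq_add_neg, Padic.add_eq_max_of_ne
        (by rw [h1, norm_neg, h2]; exact (ne_of_lt h2lt).symm), h1, norm_neg, h2]
      exact max_eq_left h2lt.le
    have h4 : ‖2 * α * (redeiD d z n : ℚ_[p])‖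
        = ‖(redeiD d z n : ℚ_[p])‖ := by
      rw [norm_mul, norm_mul, h2norm, hαnorm]; ring
    rw [hdiff, h4] at h3
    exact h3
  constructor
  · intro n hn hdvd
    have := (Padic.norm_intCast_lt_one_iff (k := redeiD d z n)).mpr hdvd
    rw [hDnorm n hn] at this
    exact lt_irrefl 1 this
  · refine ⟨α, hα, ?_⟩
    rw [tendsto_iff_norm_sub_tendsto_zero]
    refine squeeze_zero (fun n => norm_nonneg _) ?_
      (tendsto_pow_atTop_nhds_zero_of_lt_one hrnn hrlt)
    intro n
    rcases Nat.eq_zero_or_pos n with rfl | hn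
    · have hD0 : redeiD d z 0 = 0 := by simp [redeiD]
      simp [hD0, hαnorm]
    · have hDne : (redeiD d z n : ℚ_[p]) ≠ 0 := by
        intro h
        have := hDnorm n hn
        rw [h, norm_zero] at this
        norm_num at this
      have heq : (redeiN d z n : ℚ_[p]) / (redeiD d z n : ℚ_[p]) - α
          = ((z : ℚ_[p]) - α) ^ n / (redeiD d z n : ℚ_[p]) := by
        rw [km n]
        field_simp
      rw [heq, norm_div, norm_pow, hDnorm n hn, div_one]
end
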